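/- Lemma 1: For every s ∈ {0,…,n−1} and every β ∈ F^*, the cyclic derivative descendant D(M_s, β) of the extended minimal cyclic code M_s is the extended cyclic code with exponent set cc(P(s)). In particular the exponent set of D(M_s, β) does not depend on β. -/

import Mathlib

/-- Hamming weight of the `m`-bit binary expansion of `s`. -/
def wtm (m s : ℕ) : ℕ := ((Finset.range m).filter fun j => s.testBit j).card

/-- `Pset s`: the set of nonnegative integers whose binary expansion is
properly covered by that of `s`. -/
def Pset (s : ℕ) : Finset ℕ :=
  (Finset.range (s + 1)).filter fun k => k ||| s = s ∧ k ≠ s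

/-- The cyclotomic coset `C_s` modulo `n = 2^m - 1`. -/
def cycCoset (n m s : ℕ) : Finset ℕ := (Finset.range m).image fun j => 2 ^ j * s % n

/-- `cc S`: union of all cyclotomic cosets meeting `S`. -/
def ccSet (n m : ℕ) (S : Finset ℕ) : Finset ℕ := S.biUnion (cycCoset n m)

/-- `cr S`: the set of coset representatives (minimal elements of the cosets) of `S`. -/
def crSet (n m : ℕ) (S : Finset ℕ) : Finset ℕ :=
  (ccSet n m S).filter fun s => ∀ t ∈ cycCoset n m s, s ≤ t

/-- `S` is an exponent set: a set of residues mod `n` closed under doubling mod `n`. -/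
def IsExpSet (n : ℕ) (S : Finset ℕ) : Prop :=
  (∀ j ∈ S, j < n) ∧ ∀ j ∈ S, 2 * j % n ∈ S

/-- The extended cyclic code of length `2^m` with exponent set `S`. -/
def extCyclicCode {F : Type*} [Field F] (n : ℕ) (S : Finset ℕ) : Set (F → F) :=
  { c | ∃ A : ℕ → F, (∀ j ∈ S, A (2 * j % n) = A j ^ 2) ∧
      ∀ x : F, c x = ∑ j ∈ S, A j * x ^ j }

/-- The set of derivatives of the codewords of `C` in direction `β`. -/
def derivSet {F : Type*} [Field F] (β : F) (C : Set (F → F)) : Set (F → F) :=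
  { d | ∃ c ∈ C, d = fun x => c (x + β) - c x }

/-- Minimum Hamming distance (= minimum weight) of a code. -/
noncomputable def minDist {F : Type*} [Field F] [Fintype F] [DecidableEq F]
    (C : Set (F → F)) : ℕ :=
  sInf { w | ∃ c ∈ C, c ≠ (0 : F → F) ∧ hammingNorm c = w }


/-! Basic testBit helpers -/

lemma cdd_tb_two_mul_zero (x : ℕ) : (2*x).testBit 0 = false := by
  simp [Nat.testBit_eq_decide_div_mod_eq, Nat.mul_mod_right]

lemma cdd_tb_two_mul_succ (x i : ℕ) : (2*x).testBit (i+1) = x.testBit i := by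
  rw [Nat.testBit_succ]; congr 1; omega

lemma cdd_tb_two_mul_one_zero (x : ℕ) : (2*x+1).testBit 0 = true := by
  simp [Nat.testBit_eq_decide_div_mod_eq]

lemma cdd_tb_two_mul_one_succ (x i : ℕ) : (2*x+1).testBit (i+1) = x.testBit i := by
  rw [Nat.testBit_succ]; congr 1; omega

lemma cdd_or_sub (k j : ℕ) (h : k ||| j = j) : ∀ i, k.testBit i = true → j.testBit i = true := by
  intro i hi
  have h2 : (k ||| j).testBit i = j.testBit i := by rw [h]
  rw [Nat.testBit_or, hi] at h2
  simpa using h2.symm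

lemma cdd_sub_or (k j : ℕ) (h : ∀ i, k.testBit i = true → j.testBit i = true) : k ||| j = j := by
  apply Nat.eq_of_testBit_eq
  intro i
  rw [Nat.testBit_or]
  cases hk : k.testBit i
  · simp
  · simp [h i hk]

lemma cdd_or_le {k j : ℕ} (h : k ||| j = j) : k ≤ j := by
  have h1 : k &&& j = k := by
    apply Nat.eq_of_testBit_eq
    intro i
    rw [Nat.testBit_and]
    cases hk : k.testBit i
    · simp
    · simp [cdd_or_sub k j h i hk]
  calc k = k &&& j := h1.symm
    _ ≤ j := Nat.and_le_right

lemma cdd_or_double {k j : ℕ} (h : k ||| j = j) : (2*k) ||| (2*j) = 2*j := by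
  apply cdd_sub_or
  intro i hi
  cases i with
  | zero => rw [cdd_tb_two_mul_zero] at hi; exact absurd hi (by simp)
  | succ i =>
    rw [cdd_tb_two_mul_succ] at hi ⊢
    exact cdd_or_sub _ _ h i hi

lemma cdd_or_double_odd {k j : ℕ} (h : k ||| j = j) (b : ℕ) (hb : b ≤ 1) :
    (2*k+b) ||| (2*j+1) = 2*j+1 := by
  apply cdd_sub_or
  intro i hi
  cases i with
  | zero => rw [cdd_tb_two_mul_one_zero]
  | succ i =>
    rw [cdd_tb_two_mul_one_succ]
    interval_cases b
    · rw [show 2*k+0 = 2*k by ring, cdd_tb_two_mul_succ] at hi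
      exact cdd_or_sub _ _ h i hi
    · rw [cdd_tb_two_mul_one_succ] at hi
      exact cdd_or_sub _ _ h i hi

lemma cdd_or_half {k j : ℕ} (h : k ||| (2*j) = 2*j) : k % 2 = 0 ∧ (k/2) ||| j = j := by
  constructor
  · by_contra hk
    have h0 : k.testBit 0 = true := by
      simp [Nat.testBit_eq_decide_div_mod_eq]
      omega
    have := cdd_or_sub _ _ h 0 h0
    rw [cdd_tb_two_mul_zero] at this
    exact absurd this (by simp)
  · apply cdd_sub_or
    intro i hi
    have : k.testBit (i+1) = true := by rwa [Nat.testBit_succ]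
    have := cdd_or_sub _ _ h (i+1) this
    rwa [cdd_tb_two_mul_succ] at this

lemma cdd_or_half_odd {k j : ℕ} (h : k ||| (2*j+1) = 2*j+1) : (k/2) ||| j = j := by
  apply cdd_sub_or
  intro i hi
  have : k.testBit (i+1) = true := by rwa [Nat.testBit_succ]
  have := cdd_or_sub _ _ h (i+1) this
  rwa [cdd_tb_two_mul_one_succ] at this


lemma cdd_mulmod (n c z : ℕ) : c * (z % n) % n = c * z % n :=
  (Nat.mod_modEq z n).mul_left c

lemma cdd_rot_bits {m n : ℕ} (hm : 0 < m) (hn : n = 2 ^ m - 1) {x : ℕ} (hx : x < n) :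
    (2 * x % n).testBit 0 = x.testBit (m - 1) ∧
      ∀ i, (2 * x % n).testBit (i + 1) = (decide (i < m - 1) && x.testBit i) := by
  obtain ⟨M, rfl⟩ : ∃ M, m = M + 1 := ⟨m - 1, by omega⟩
  simp only [Nat.add_sub_cancel]
  have hpow : (2:ℕ) ^ (M+1) = 2 * 2 ^ M := by rw [pow_succ, mul_comm]
  have hMpos : 0 < (2:ℕ) ^ M := Nat.pow_pos (n := M) (by norm_num)
  obtain ⟨q, hq⟩ : ∃ q, q = x / 2 ^ M := ⟨_, rfl⟩
  obtain ⟨r, hr⟩ : ∃ r, r = x % 2 ^ M := ⟨_, rfl⟩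
  have hdr : x = 2 ^ M * q + r := by
    rw [hq, hr]; exact (Nat.div_add_mod x (2 ^ M)).symm
  have hrlt : r < 2 ^ M := by rw [hr]; exact Nat.mod_lt _ hMpos
  have hqlt : q < 2 := by
    rw [hq]; exact (Nat.div_lt_iff_lt_mul hMpos).mpr (by omega)
  have hxqr : 2 * x % n = 2 * r + q := by
    rcases (show q = 0 ∨ q = 1 by omega) with h | h
    · subst h
      rw [Nat.mod_eq_of_lt (by omega)]; omega
    · subst h
      have h1 : 2 * x = n + (2 * r + 1) := by omega
      rw [h1, Nat.add_mod_left, Nat.mod_eq_of_lt (by omega)]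
  constructor
  · rw [hxqr, Nat.testBit_eq_decide_div_mod_eq, Nat.testBit_eq_decide_div_mod_eq, pow_zero, Nat.div_one, ← hq,
      decide_eq_decide]
    omega
  · intro i
    have h2 : (2 * r + q) / 2 = r := by omega
    rw [hxqr, Nat.testBit_succ, h2, hr, Nat.testBit_mod_two_pow]

lemma cdd_rot_or {m n : ℕ} (hm : 0 < m) (hn : n = 2 ^ m - 1) {k j : ℕ}
    (hk : k < n) (hj : j < n) (h : k ||| j = j) :
    (2 * k % n) ||| (2 * j % n) = 2 * j % n := by
  obtain ⟨hk0, hks⟩ := cdd_rot_bits hm hn hk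
  obtain ⟨hj0, hjs⟩ := cdd_rot_bits hm hn hj
  apply cdd_sub_or
  intro i hi
  cases i with
  | zero =>
    rw [hk0] at hi; rw [hj0]
    exact cdd_or_sub _ _ h _ hi
  | succ i =>
    rw [hks] at hi; rw [hjs]
    rcases Bool.and_eq_true_iff.mp hi with ⟨hd, hb⟩
    rw [hd, cdd_or_sub _ _ h _ hb]
    rfl

lemma cdd_npos {m n : ℕ} (hm : 0 < m) (hn : n = 2 ^ m - 1) : 0 < n := by
  have : (2:ℕ) ^ 1 ≤ 2 ^ m := Nat.pow_le_pow_right (by norm_num) hm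
  omega

lemma cdd_rot_pow_or {m n : ℕ} (hm : 0 < m) (hn : n = 2 ^ m - 1) (t : ℕ) :
    ∀ {k j : ℕ}, k < n → j < n → k ||| j = j →
      (2 ^ t * k % n) ||| (2 ^ t * j % n) = 2 ^ t * j % n := by
  induction t with
  | zero =>
    intro k j hk hj h
    simpa [Nat.mod_eq_of_lt hk, Nat.mod_eq_of_lt hj] using h
  | succ t ih =>
    intro k j hk hj h
    have hn0 := cdd_npos hm hn
    have e : ∀ z : ℕ, 2 ^ (t+1) * z % n = 2 * (2 ^ t * z % n) % n := by
      intro z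
      rw [cdd_mulmod, ← mul_assoc, ← pow_succ']
    rw [e k, e j]
    exact cdd_rot_or hm hn (Nat.mod_lt _ hn0) (Nat.mod_lt _ hn0) (ih hk hj h)

lemma cdd_double_inj {m n : ℕ} (hm : 0 < m) (hn : n = 2 ^ m - 1) {a b : ℕ}
    (ha : a < n) (hb : b < n) (h : 2 * a % n = 2 * b % n) : a = b := by
  have hpow : (2:ℕ) ^ m = 2 * 2 ^ (m-1) := by
    conv_lhs => rw [show m = (m-1)+1 by omega]
    rw [pow_succ, mul_comm]
  have hodd : ¬ (2 ∣ n) := by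
    intro ⟨c, hc⟩
    omega
  have hcop : Nat.gcd n 2 = 1 :=
    Nat.Coprime.symm ((Nat.prime_two.coprime_iff_not_dvd).mpr hodd)
  have h2 : a ≡ b [MOD n] := Nat.ModEq.cancel_left_of_coprime hcop h
  have h3 : a % n = b % n := h2
  rwa [Nat.mod_eq_of_lt ha, Nat.mod_eq_of_lt hb] at h3

lemma cdd_pow_cycle {m n : ℕ} (hm : 0 < m) (hn : n = 2 ^ m - 1) {x : ℕ} (hx : x < n) :
    2 ^ m * x % n = x := by
  have hp1 : (2:ℕ) ^ m = n + 1 := by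
    have : (1:ℕ) ≤ 2 ^ m := Nat.one_le_two_pow
    omega
  have : (n + 1) * x = x + x * n := by ring
  rw [hp1, this, Nat.add_mul_mod_self_right, Nat.mod_eq_of_lt hx]

/-! Coset lemmas -/

lemma cdd_mem_cycCoset_iff {n m s t : ℕ} :
    t ∈ cycCoset n m s ↔ ∃ a, a < m ∧ 2 ^ a * s % n = t := by
  simp [cycCoset, Finset.mem_image, Finset.mem_range]

lemma cdd_self_mem_cycCoset {n m s : ℕ} (hm : 0 < m) (hs : s < n) :
    s ∈ cycCoset n m s :=
  cdd_mem_cycCoset_iff.mpr ⟨0, hm, by simpa using Nat.mod_eq_of_lt hs⟩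

lemma cdd_cycCoset_lt {n m s t : ℕ} (hn0 : 0 < n) (ht : t ∈ cycCoset n m s) : t < n := by
  obtain ⟨a, -, rfl⟩ := cdd_mem_cycCoset_iff.mp ht
  exact Nat.mod_lt _ hn0

lemma cdd_cycCoset_closed {m n s : ℕ} (hm : 0 < m) (hn : n = 2 ^ m - 1) (hs : s < n)
    {j : ℕ} (hj : j ∈ cycCoset n m s) : 2 * j % n ∈ cycCoset n m s := by
  obtain ⟨a, ha, rfl⟩ := cdd_mem_cycCoset_iff.mp hj
  have he : 2 * (2 ^ a * s % n) % n = 2 ^ (a+1) * s % n := by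
    rw [cdd_mulmod, ← mul_assoc, ← pow_succ']
  rw [he]
  rcases (show a + 1 < m ∨ a + 1 = m by omega) with h | h
  · exact cdd_mem_cycCoset_iff.mpr ⟨a+1, h, rfl⟩
  · rw [h, cdd_pow_cycle hm hn hs]
    exact cdd_self_mem_cycCoset hm hs

lemma cdd_cycCoset_closed_pow {m n s : ℕ} (hm : 0 < m) (hn : n = 2 ^ m - 1) (hs : s < n)
    (t : ℕ) {j : ℕ} (hj : j ∈ cycCoset n m s) : 2 ^ t * j % n ∈ cycCoset n m s := by
  induction t with
  | zero =>
    simpa [Nat.mod_eq_of_lt (cdd_cycCoset_lt (cdd_npos hm hn) hj)] using hj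
  | succ t ih =>
    have he : 2 ^ (t+1) * j % n = 2 * (2 ^ t * j % n) % n := by
      rw [cdd_mulmod, ← mul_assoc, ← pow_succ']
    rw [he]
    exact cdd_cycCoset_closed hm hn hs ih

lemma cdd_mem_Pset_iff {s k : ℕ} : k ∈ Pset s ↔ k ||| s = s ∧ k ≠ s := by
  constructor
  · intro h
    exact (Finset.mem_filter.mp h).2
  · intro h
    exact Finset.mem_filter.mpr ⟨Finset.mem_range.mpr (by
      have := cdd_or_le h.1; omega), h⟩

lemma cdd_ccSet_lt {n m : ℕ} {S : Finset ℕ} (hn0 : 0 < n) {k : ℕ}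
    (hk : k ∈ ccSet n m S) : k < n := by
  obtain ⟨k0, -, hk⟩ := Finset.mem_biUnion.mp hk
  exact cdd_cycCoset_lt hn0 hk

lemma cdd_ccSet_closed {m n s : ℕ} (hm : 0 < m) (hn : n = 2 ^ m - 1) (hs : s < n)
    {k : ℕ} (hk : k ∈ ccSet n m (Pset s)) : 2 * k % n ∈ ccSet n m (Pset s) := by
  obtain ⟨k0, hk0, hk⟩ := Finset.mem_biUnion.mp hk
  have hk0n : k0 < n := by
    have := cdd_or_le (cdd_mem_Pset_iff.mp hk0).1; omega
  exact Finset.mem_biUnion.mpr ⟨k0, hk0, cdd_cycCoset_closed hm hn hk0n hk⟩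

/-- Any proper submask of an element of the coset of `s` lies in `cc(P(s))`. -/
lemma cdd_submask_mem_ccSet {m n s : ℕ} (hm : 0 < m) (hn : n = 2 ^ m - 1) (hs : s < n)
    {j k : ℕ} (hj : j ∈ cycCoset n m s) (hsub : k ||| j = j) (hne : k ≠ j) :
    k ∈ ccSet n m (Pset s) := by
  have hn0 := cdd_npos hm hn
  obtain ⟨a, ha, rfl⟩ := cdd_mem_cycCoset_iff.mp hj
  have hjn : 2 ^ a * s % n < n := Nat.mod_lt _ hn0
  have hkn : k < n := lt_of_le_of_lt (cdd_or_le hsub) hjn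
  -- rotate back by m - a
  have hrot := cdd_rot_pow_or hm hn (m - a) hkn hjn hsub
  have hjs : 2 ^ (m-a) * (2 ^ a * s % n) % n = s := by
    rw [cdd_mulmod, ← mul_assoc, ← pow_add, Nat.sub_add_cancel (le_of_lt ha),
      cdd_pow_cycle hm hn hs]
  rw [hjs] at hrot
  set k0 := 2 ^ (m-a) * k % n with hk0def
  have hkk0 : 2 ^ a * k0 % n = k := by
    rw [hk0def, cdd_mulmod, ← mul_assoc, ← pow_add, Nat.add_sub_cancel' (le_of_lt ha),
      cdd_pow_cycle hm hn hkn]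
  have hk0ne : k0 ≠ s := by
    intro h
    apply hne
    rw [← hkk0, h]
  refine Finset.mem_biUnion.mpr ⟨k0, cdd_mem_Pset_iff.mpr ⟨hrot, hk0ne⟩, ?_⟩
  exact cdd_mem_cycCoset_iff.mpr ⟨a, ha, hkk0⟩

/-! Char-2 binomial expansion over submasks -/

lemma cdd_add_pow {R : Type*} [CommRing R] [CharP R 2] (x y : R) (j : ℕ) :
    (x + y) ^ j =
      ∑ k ∈ (Finset.range (j+1)).filter (fun k => k ||| j = j), y ^ (j - k) * x ^ k := by
  induction j using Nat.strong_induction_on with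
  | _ j IH =>
  have hEven : ∀ t : ℕ, t < j →
      (x + y) ^ (2*t) = ∑ k ∈ (Finset.range (t+1)).filter (fun k => k ||| t = t),
        y ^ (2*t - 2*k) * x ^ (2*k) := by
    intro t htj
    rw [pow_mul', IH t (by omega), CharTwo.sum_sq]
    apply Finset.sum_congr rfl
    intro k hk
    have hk1 : k ≤ t := by
      have := Finset.mem_range.mp (Finset.mem_filter.mp hk).1; omega
    rw [mul_pow, ← pow_mul, ← pow_mul, show (t-k)*2 = 2*t-2*k by omega,
      show k*2 = 2*k by ring]
  rcases Nat.even_or_odd j with ⟨t, ht⟩ | ⟨t, ht⟩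
  · rcases Nat.eq_zero_or_pos t with rfl | htpos
    · subst ht
      simp [Finset.range_one, Finset.filter_singleton]
    · have ht2 : j = 2*t := by omega
      subst ht2
      rw [hEven t (by omega)]
      apply Finset.sum_nbij' (i := fun k => 2*k) (j := fun k => k/2)
      · intro k hk
        obtain ⟨hk1, hk2⟩ := Finset.mem_filter.mp hk
        refine Finset.mem_filter.mpr ⟨Finset.mem_range.mpr ?_, cdd_or_double hk2⟩
        have := Finset.mem_range.mp hk1; omega
      · intro k hk
        obtain ⟨hk1, hk2⟩ := Finset.mem_filter.mp hk
        refine Finset.mem_filter.mpr ⟨Finset.mem_range.mpr ?_, (cdd_or_half hk2).2⟩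
        have := Finset.mem_range.mp hk1; omega
      · intro k _; omega
      · intro k hk
        have := (cdd_or_half (Finset.mem_filter.mp hk).2).1; omega
      · intro k _; rfl
  · subst ht
    have h1 := hEven t (by omega)
    rw [pow_succ, h1, mul_add, Finset.sum_mul, Finset.sum_mul]
    rw [← Finset.sum_filter_add_sum_filter_not
      ((Finset.range (2*t+1+1)).filter (fun k => k ||| (2*t+1) = 2*t+1)) (fun k => k % 2 = 1)]
    congr 1
    · -- odd part:  ∑ k, (y^(2t-2k) x^(2k)) * x  = ∑ odd submasks
      apply Finset.sum_nbij' (i := fun k => 2*k+1) (j := fun k => k/2)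
      · intro k hk
        obtain ⟨hk1, hk2⟩ := Finset.mem_filter.mp hk
        refine Finset.mem_filter.mpr ⟨Finset.mem_filter.mpr
          ⟨Finset.mem_range.mpr ?_, cdd_or_double_odd hk2 1 (by norm_num)⟩, by omega⟩
        have := Finset.mem_range.mp hk1; omega
      · intro k hk
        obtain ⟨hk1, hk2⟩ := Finset.mem_filter.mp hk
        obtain ⟨hk3, hk4⟩ := Finset.mem_filter.mp hk1
        refine Finset.mem_filter.mpr ⟨Finset.mem_range.mpr ?_, cdd_or_half_odd hk4⟩
        have := Finset.mem_range.mp hk3; omega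
      · intro k _; omega
      · intro k hk
        have := (Finset.mem_filter.mp hk).2; omega
      · intro k hk
        obtain ⟨hk1, hk2⟩ := Finset.mem_filter.mp hk
        have hk3 : k ≤ t := by have := Finset.mem_range.mp hk1; omega
        rw [mul_assoc, ← pow_succ, show 2*t+1-(2*k+1) = 2*t-2*k by omega]
    · -- even part
      apply Finset.sum_nbij' (i := fun k => 2*k) (j := fun k => k/2)
      · intro k hk
        obtain ⟨hk1, hk2⟩ := Finset.mem_filter.mp hk
        have h2 : (2*k+0) ||| (2*t+1) = 2*t+1 := cdd_or_double_odd hk2 0 (by norm_num)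
        refine Finset.mem_filter.mpr ⟨Finset.mem_filter.mpr
          ⟨Finset.mem_range.mpr ?_, by simpa using h2⟩, by omega⟩
        have := Finset.mem_range.mp hk1; omega
      · intro k hk
        obtain ⟨hk1, hk2⟩ := Finset.mem_filter.mp hk
        obtain ⟨hk3, hk4⟩ := Finset.mem_filter.mp hk1
        refine Finset.mem_filter.mpr ⟨Finset.mem_range.mpr ?_, cdd_or_half_odd hk4⟩
        have := Finset.mem_range.mp hk3; omega
      · intro k _; omega
      · intro k hk
        have := (Finset.mem_filter.mp hk).2; omega
      · intro k hk
        obtain ⟨hk1, hk2⟩ := Finset.mem_filter.mp hk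
        have hk3 : k ≤ t := by have := Finset.mem_range.mp hk1; omega
        rw [mul_comm (y ^ (2*t-2*k) * x ^ (2*k)) y, ← mul_assoc, ← pow_succ',
          show 2*t-2*k+1 = 2*t+1-2*k by omega]

/-! Field lemmas -/

lemma cdd_charP {F : Type*} [Field F] [Fintype F] {m : ℕ} (hF : Fintype.card F = 2 ^ m) :
    CharP F 2 := by
  have hCp : CharP F (ringChar F) := ringChar.charP F
  obtain ⟨k, hk1, hk2⟩ := @FiniteField.card F _ _ (ringChar F) hCp
  have hdvd : ringChar F ∣ 2 ^ m := by
    rw [← hF, hk2]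
    exact dvd_pow_self _ k.pos.ne'
  have h2 : ringChar F = 2 :=
    (Nat.prime_dvd_prime_iff_eq hk1 Nat.prime_two).mp (Nat.Prime.dvd_of_dvd_pow hk1 hdvd)
  rwa [h2] at hCp

lemma cdd_beta_pow_n {F : Type*} [Field F] [Fintype F] {m n : ℕ} (hn : n = 2 ^ m - 1)
    (hF : Fintype.card F = 2 ^ m) {β : F} (hβ : β ≠ 0) : β ^ n = 1 := by
  subst hn; rw [← hF]
  exact FiniteField.pow_card_sub_one_eq_one β hβ

lemma cdd_pow_mod {F : Type*} [Field F] {β : F} {n : ℕ} (hβn : β ^ n = 1) (a : ℕ) :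
    β ^ a = β ^ (a % n) := by
  conv_lhs => rw [← Nat.mod_add_div a n]
  rw [pow_add, pow_mul, hβn, one_pow, mul_one]

lemma cdd_pow_sub {F : Type*} [Field F] {β : F} (hβ : β ≠ 0) {a b c d : ℕ}
    (hba : b ≤ a) (hdc : d ≤ c) (hac : β ^ a = β ^ c) (hbd : β ^ b = β ^ d) :
    β ^ (a - b) = β ^ (c - d) := by
  have h1 : β ^ (a - b) * β ^ b = β ^ (c - d) * β ^ b := by
    rw [← pow_add, Nat.sub_add_cancel hba, hac, hbd, ← pow_add, Nat.sub_add_cancel hdc]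
  exact mul_right_cancel₀ (pow_ne_zero _ hβ) h1

/-- The coefficient function of the derivative codeword. -/
def cddB {F : Type*} [Field F] (n m s : ℕ) (β : F) (A : ℕ → F) (k : ℕ) : F :=
  ∑ j ∈ (cycCoset n m s).filter (fun j => k ||| j = j ∧ k ≠ j), A j * β ^ (j - k)

lemma cdd_B_conj {m n s : ℕ} (hm : 0 < m) (hn : n = 2 ^ m - 1) (hs : s < n)
    {F : Type*} [Field F] [CharP F 2] {β : F} (hβ : β ≠ 0) (hβn : β ^ n = 1)
    {A : ℕ → F} (hA : ∀ j ∈ cycCoset n m s, A (2 * j % n) = A j ^ 2)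
    {k : ℕ} (hk : k < n) :
    cddB n m s β A (2 * k % n) = (cddB n m s β A k) ^ 2 := by
  have hn0 := cdd_npos hm hn
  rw [cddB, cddB, CharTwo.sum_sq]
  symm
  apply Finset.sum_nbij' (i := fun j => 2 * j % n) (j := fun j => 2 ^ (m-1) * j % n)
  · intro j hj
    obtain ⟨hjC, hjk, hjne⟩ := Finset.mem_filter.mp hj
    have hjn : j < n := cdd_cycCoset_lt hn0 hjC
    refine Finset.mem_filter.mpr ⟨cdd_cycCoset_closed hm hn hs hjC,
      cdd_rot_or hm hn hk hjn hjk, ?_⟩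
    intro h
    exact hjne (cdd_double_inj hm hn hk hjn h)
  · intro j' hj'
    obtain ⟨hjC, hjk, hjne⟩ := Finset.mem_filter.mp hj'
    have hjn : j' < n := cdd_cycCoset_lt hn0 hjC
    have hkr : 2 ^ (m-1) * (2 * k % n) % n = k := by
      rw [cdd_mulmod, ← mul_assoc, ← pow_succ, show m - 1 + 1 = m by omega,
        cdd_pow_cycle hm hn hk]
    have hrot := cdd_rot_pow_or hm hn (m-1) (Nat.mod_lt _ hn0 : 2 * k % n < n) hjn hjk
    rw [hkr] at hrot
    refine Finset.mem_filter.mpr ⟨cdd_cycCoset_closed_pow hm hn hs (m-1) hjC, hrot, ?_⟩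
    intro h
    apply hjne
    rw [h, cdd_mulmod, ← mul_assoc, mul_comm 2 (2 ^ (m-1)), ← pow_succ,
      show m - 1 + 1 = m by omega, cdd_pow_cycle hm hn hjn]
  · intro j hj
    obtain ⟨hjC, -, -⟩ := Finset.mem_filter.mp hj
    have hjn : j < n := cdd_cycCoset_lt hn0 hjC
    rw [cdd_mulmod, ← mul_assoc, ← pow_succ, show m - 1 + 1 = m by omega,
      cdd_pow_cycle hm hn hjn]
  · intro j' hj'
    obtain ⟨hjC, -, -⟩ := Finset.mem_filter.mp hj'
    have hjn : j' < n := cdd_cycCoset_lt hn0 hjC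
    rw [cdd_mulmod, ← mul_assoc, mul_comm 2 (2 ^ (m-1)), ← pow_succ,
      show m - 1 + 1 = m by omega, cdd_pow_cycle hm hn hjn]
  · intro j hj
    obtain ⟨hjC, hjk, hjne⟩ := Finset.mem_filter.mp hj
    have hjn : j < n := cdd_cycCoset_lt hn0 hjC
    have hkj : k ≤ j := cdd_or_le hjk
    have hkj' : 2 * k % n ≤ 2 * j % n := cdd_or_le (cdd_rot_or hm hn hk hjn hjk)
    rw [mul_pow, ← hA j hjC, ← pow_mul, show (j - k) * 2 = 2 * j - 2 * k by omega]
    congr 1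
    exact cdd_pow_sub hβ (by omega) hkj' (cdd_pow_mod hβn (2*j)) (cdd_pow_mod hβn (2*k))

lemma cdd_deriv_repr {m n s : ℕ} (hm : 0 < m) (hn : n = 2 ^ m - 1) (hs : s < n)
    {F : Type*} [Field F] [CharP F 2] (β : F) (A : ℕ → F) (x : F) :
    (∑ j ∈ cycCoset n m s, A j * (x + β) ^ j) - (∑ j ∈ cycCoset n m s, A j * x ^ j)
      = ∑ k ∈ ccSet n m (Pset s), cddB n m s β A k * x ^ k := by
  have hn0 := cdd_npos hm hn
  rw [← Finset.sum_sub_distrib]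
  have hterm : ∀ j ∈ cycCoset n m s, A j * (x + β) ^ j - A j * x ^ j
      = ∑ k ∈ (Finset.range (j+1)).filter (fun k => k ||| j = j ∧ k ≠ j),
          A j * (β ^ (j - k) * x ^ k) := by
    intro j _
    rw [cdd_add_pow, Finset.mul_sum]
    have hjmem : j ∈ (Finset.range (j+1)).filter (fun k => k ||| j = j) := by
      simp [Finset.mem_filter, Nat.or_self]
    rw [← Finset.sum_erase_add _ _ hjmem]
    have hfj : A j * (β ^ (j - j) * x ^ j) = A j * x ^ j := by simp
    rw [hfj, add_sub_cancel_right]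
    apply Finset.sum_congr
    · ext k
      simp only [Finset.mem_erase, Finset.mem_filter, Finset.mem_range]
      tauto
    · intro k _; rfl
  rw [Finset.sum_congr rfl hterm]
  have hsets : ∀ j ∈ cycCoset n m s,
      (Finset.range (j+1)).filter (fun k => k ||| j = j ∧ k ≠ j)
        = (ccSet n m (Pset s)).filter (fun k => k ||| j = j ∧ k ≠ j) := by
    intro j hj
    ext k
    simp only [Finset.mem_filter, Finset.mem_range]
    constructor
    · rintro ⟨hk1, hk2⟩
      exact ⟨cdd_submask_mem_ccSet hm hn hs hj hk2.1 hk2.2, hk2⟩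
    · rintro ⟨hk1, hk2⟩
      refine ⟨?_, hk2⟩
      have := cdd_or_le hk2.1; omega
  rw [Finset.sum_congr rfl (fun j hj => by rw [hsets j hj, Finset.sum_filter])]
  rw [Finset.sum_comm]
  apply Finset.sum_congr rfl
  intro k _
  rw [cddB, Finset.sum_filter, Finset.sum_mul]
  apply Finset.sum_congr rfl
  intro j _
  split_ifs
  · ring
  · simp

/-! Part 2 helpers -/

lemma cdd_cyc_inv1 {m a : ℕ} (hm : 0 < m) (ha : a < m) : ((a+1) % m + (m-1)) % m = a := by
  rcases (show a + 1 = m ∨ a + 1 < m by omega) with h | h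
  · rw [h, Nat.mod_self, zero_add, Nat.mod_eq_of_lt (by omega)]
    omega
  · rw [Nat.mod_eq_of_lt h, show a + 1 + (m-1) = m + a by omega, Nat.add_mod_left,
      Nat.mod_eq_of_lt ha]

lemma cdd_cyc_inv2 {m a : ℕ} (hm : 0 < m) (ha : a < m) : ((a + (m-1)) % m + 1) % m = a := by
  rcases Nat.eq_zero_or_pos a with rfl | hpos
  · rw [zero_add, Nat.mod_eq_of_lt (show m - 1 < m by omega), show m - 1 + 1 = m by omega,
      Nat.mod_self]
  · rw [show a + (m-1) = m + (a-1) by omega, Nat.add_mod_left,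
      Nat.mod_eq_of_lt (show a - 1 < m by omega), show a - 1 + 1 = a by omega,
      Nat.mod_eq_of_lt ha]

lemma cdd_Agamma_conj {m n s : ℕ} (hm : 0 < m) (hn : n = 2 ^ m - 1) (hs : s < n)
    {F : Type*} [Field F] [Fintype F] [CharP F 2] (hF : Fintype.card F = 2 ^ m)
    (γ : F) {j : ℕ} (hj : j < n) :
    (∑ a ∈ Finset.range m, if 2 ^ a * s % n = 2 * j % n then γ ^ (2 ^ a) else 0)
      = (∑ a ∈ Finset.range m, if 2 ^ a * s % n = j then γ ^ (2 ^ a) else 0) ^ 2 := by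
  have hn0 := cdd_npos hm hn
  rw [CharTwo.sum_sq]
  have hterm : ∀ a, (if 2 ^ a * s % n = j then γ ^ (2 ^ a) else 0) ^ 2
      = (if 2 ^ a * s % n = j then γ ^ (2 ^ (a+1)) else 0) := by
    intro a; split_ifs
    · rw [← pow_mul, ← pow_succ]
    · exact zero_pow (by norm_num)
  rw [Finset.sum_congr rfl (fun a _ => hterm a)]
  symm
  apply Finset.sum_nbij' (i := fun a => (a+1) % m) (j := fun a => (a + (m-1)) % m)
  · intro a _
    exact Finset.mem_range.mpr (Nat.mod_lt _ hm)
  · intro a _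
    exact Finset.mem_range.mpr (Nat.mod_lt _ hm)
  · intro a ha
    exact cdd_cyc_inv1 hm (Finset.mem_range.mp ha)
  · intro a ha
    exact cdd_cyc_inv2 hm (Finset.mem_range.mp ha)
  · intro a ha
    have haa := Finset.mem_range.mp ha
    have hstep : 2 ^ ((a+1) % m) * s % n = 2 * (2 ^ a * s % n) % n := by
      rcases (show a + 1 = m ∨ a + 1 < m by omega) with h | h
      · have h1 : 2 * (2 ^ a * s % n) % n = s := by
          rw [cdd_mulmod, ← mul_assoc, show (2:ℕ) * 2 ^ a = 2 ^ m by rw [← h, pow_succ'],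
            cdd_pow_cycle hm hn hs]
        rw [h, Nat.mod_self, pow_zero, one_mul, Nat.mod_eq_of_lt hs, h1]
      · rw [Nat.mod_eq_of_lt h, cdd_mulmod, ← mul_assoc, pow_succ']
    have hcond : (2 ^ ((a+1) % m) * s % n = 2 * j % n) ↔ (2 ^ a * s % n = j) := by
      rw [hstep]
      constructor
      · intro h2
        exact cdd_double_inj hm hn (Nat.mod_lt _ hn0) hj h2
      · rintro rfl; rfl
    have hγ : γ ^ (2 ^ ((a+1) % m)) = γ ^ (2 ^ (a+1)) := by
      rcases (show a + 1 = m ∨ a + 1 < m by omega) with h | h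
      · rw [h, Nat.mod_self, pow_zero, pow_one, ← hF, FiniteField.pow_card]
      · rw [Nat.mod_eq_of_lt h]
    rw [hγ]
    simp only [hcond]

lemma cdd_coeff_sum {F : Type*} [Field F] (T : Finset ℕ) (c : ℕ → F) (k : ℕ) :
    (∑ j ∈ T, Polynomial.C (c j) * Polynomial.X ^ j).coeff k
      = if k ∈ T then c k else 0 := by
  rw [Polynomial.finset_sum_coeff]
  rw [Finset.sum_congr rfl (fun j _ => by
    rw [Polynomial.coeff_C_mul, Polynomial.coeff_X_pow])]
  simp_rw [mul_ite, mul_one, mul_zero]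
  exact Finset.sum_ite_eq T k c

lemma cdd_eval_sum {F : Type*} [Field F] (T : Finset ℕ) (c : ℕ → F) (x : F) :
    (∑ j ∈ T, Polynomial.C (c j) * Polynomial.X ^ j).eval x = ∑ j ∈ T, c j * x ^ j := by
  rw [Polynomial.eval_finset_sum]
  apply Finset.sum_congr rfl
  intro j _
  simp

lemma cdd_natDegree_sum {F : Type*} [Field F] (T : Finset ℕ) (c : ℕ → F) (d : ℕ)
    (h : ∀ j ∈ T, j ≤ d) :
    (∑ j ∈ T, Polynomial.C (c j) * Polynomial.X ^ j).natDegree ≤ d := by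
  apply Polynomial.natDegree_sum_le_of_forall_le
  intro j hj
  refine le_trans (Polynomial.natDegree_mul_le) ?_
  rw [Polynomial.natDegree_C, Polynomial.natDegree_X_pow, zero_add]
  exact h j hj

lemma cdd_poly_zero {F : Type*} [Field F] [Fintype F] (p : Polynomial F)
    (hdeg : p.natDegree < Fintype.card F) (heval : ∀ x : F, p.eval x = 0) : p = 0 :=
  Polynomial.eq_zero_of_natDegree_lt_card_of_eval_eq_zero p Function.injective_id
    (fun i => heval i) (by simpa using hdeg)

lemma cdd_expset_pow {n : ℕ} (hn0 : 0 < n) {S' : Finset ℕ} (hS' : IsExpSet n S')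
    {j : ℕ} (hj : j ∈ S') (t : ℕ) : 2 ^ t * j % n ∈ S' := by
  induction t with
  | zero =>
    simpa [Nat.mod_eq_of_lt (hS'.1 j hj)] using hj
  | succ t ih =>
    have he : 2 ^ (t+1) * j % n = 2 * (2 ^ t * j % n) % n := by
      rw [cdd_mulmod, ← mul_assoc, ← pow_succ']
    rw [he]
    exact hS'.2 _ ih

lemma cdd_natDegree_sum2 {F : Type*} [Field F] {ι : Type*} (T : Finset ι) (c : ι → F)
    (e : ι → ℕ) (d : ℕ) (h : ∀ j ∈ T, e j ≤ d) :
    (∑ j ∈ T, Polynomial.C (c j) * Polynomial.X ^ (e j)).natDegree ≤ d := by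
  apply Polynomial.natDegree_sum_le_of_forall_le
  intro j hj
  refine le_trans (Polynomial.natDegree_mul_le) ?_
  rw [Polynomial.natDegree_C, Polynomial.natDegree_X_pow, zero_add]
  exact h j hj

lemma cdd_key {m n s : ℕ} (hm : 0 < m) (hn : n = 2 ^ m - 1) (hs : s < n)
    {F : Type*} [Field F] [Fintype F] [CharP F 2] (hF : Fintype.card F = 2 ^ m)
    {β : F} (hβ : β ≠ 0) {S' : Finset ℕ} (hS' : IsExpSet n S')
    (hsub : derivSet β (extCyclicCode n (cycCoset n m s)) ⊆ (extCyclicCode n S' : Set (F → F)))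
    {k0 : ℕ} (hk0 : k0 ∈ Pset s) : k0 ∈ S' := by
  classical
  have hn0 := cdd_npos hm hn
  have hβn := cdd_beta_pow_n hn hF hβ
  obtain ⟨hk0s, hk0ne⟩ := cdd_mem_Pset_iff.mp hk0
  have hk0n : k0 < n := lt_of_le_of_lt (cdd_or_le hk0s) hs
  by_contra hk0S
  set T := (Finset.range m).filter
    (fun a => k0 ||| (2^a*s%n) = 2^a*s%n ∧ k0 ≠ 2^a*s%n) with hT
  set Q : Polynomial F :=
    ∑ a ∈ T, Polynomial.C (β ^ (2^a*s%n - k0)) * Polynomial.X ^ (2^a) with hQ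
  have hevalQ : ∀ γ : F, Q.eval γ = 0 := by
    intro γ
    set A : ℕ → F := fun j => ∑ a ∈ Finset.range m, if 2^a*s%n = j then γ^(2^a) else 0
      with hA
    have hAconj : ∀ j ∈ cycCoset n m s, A (2*j%n) = A j^2 := fun j hj =>
      cdd_Agamma_conj hm hn hs hF γ (cdd_cycCoset_lt hn0 hj)
    set c : F → F := fun x => ∑ j ∈ cycCoset n m s, A j * x^j with hc
    have hcmem : c ∈ (extCyclicCode n (cycCoset n m s) : Set (F → F)) :=
      ⟨A, hAconj, fun x => rfl⟩
    have hdmem : (fun x => c (x+β) - c x) ∈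
        derivSet β (extCyclicCode n (cycCoset n m s)) := ⟨c, hcmem, rfl⟩
    obtain ⟨A', hA'conj, hA'⟩ := hsub hdmem
    have hrep : ∀ x : F, ∑ k ∈ ccSet n m (Pset s), cddB n m s β A k * x^k
        = ∑ j ∈ S', A' j * x^j := by
      intro x
      rw [← cdd_deriv_repr hm hn hs β A x]
      exact hA' x
    set P : Polynomial F :=
      (∑ k ∈ ccSet n m (Pset s), Polynomial.C (cddB n m s β A k) * Polynomial.X ^ k)
        - ∑ j ∈ S', Polynomial.C (A' j) * Polynomial.X ^ j with hP
    have hPeval : ∀ x : F, P.eval x = 0 := by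
      intro x
      rw [hP, Polynomial.eval_sub, cdd_eval_sum, cdd_eval_sum, hrep x, sub_self]
    have hPdeg : P.natDegree < Fintype.card F := by
      have h1 := cdd_natDegree_sum (ccSet n m (Pset s)) (cddB n m s β A) (n-1)
        (fun j hj => by have := cdd_ccSet_lt hn0 hj; omega)
      have h2 := cdd_natDegree_sum S' A' (n-1) (fun j hj => by have := hS'.1 j hj; omega)
      have h3 := Polynomial.natDegree_sub_le
        (∑ k ∈ ccSet n m (Pset s), Polynomial.C (cddB n m s β A k) * Polynomial.X ^ k)
        (∑ j ∈ S', Polynomial.C (A' j) * Polynomial.X ^ j)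
      rw [hP, hF]
      have h4 : (1:ℕ) ≤ 2 ^ m := Nat.one_le_two_pow
      refine lt_of_le_of_lt (le_trans h3 (max_le h1 h2)) (by omega)
    have hP0 : P = 0 := cdd_poly_zero P hPdeg hPeval
    have hk0cc : k0 ∈ ccSet n m (Pset s) :=
      Finset.mem_biUnion.mpr ⟨k0, hk0, cdd_self_mem_cycCoset hm hk0n⟩
    have hco : cddB n m s β A k0 = 0 := by
      have h5 := congrArg (fun p => Polynomial.coeff p k0) hP0
      simp only [hP, Polynomial.coeff_sub, Polynomial.coeff_zero] at h5
      rw [cdd_coeff_sum, cdd_coeff_sum, if_pos hk0cc, if_neg hk0S] at h5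
      simpa using h5
    have hBQ : cddB n m s β A k0 = Q.eval γ := by
      rw [cddB, hQ, Polynomial.eval_finset_sum]
      simp_rw [Polynomial.eval_mul, Polynomial.eval_C, Polynomial.eval_pow, Polynomial.eval_X]
      simp only [hA]
      simp_rw [Finset.sum_mul, ite_mul, zero_mul]
      rw [Finset.sum_comm]
      rw [Finset.sum_congr rfl (fun a _ => Finset.sum_ite_eq
        ((cycCoset n m s).filter (fun j => k0 ||| j = j ∧ k0 ≠ j)) (2^a*s%n)
        (fun j => γ^(2^a) * β^(j-k0)))]
      rw [hT, Finset.sum_filter]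
      apply Finset.sum_congr rfl
      intro a ha
      by_cases hpa : k0 ||| 2^a*s%n = 2^a*s%n ∧ k0 ≠ 2^a*s%n
      · have hmem : 2^a*s%n ∈ (cycCoset n m s).filter (fun j => k0 ||| j = j ∧ k0 ≠ j) :=
          Finset.mem_filter.mpr
            ⟨cdd_mem_cycCoset_iff.mpr ⟨a, Finset.mem_range.mp ha, rfl⟩, hpa⟩
        rw [if_pos hmem, if_pos hpa, mul_comm]
      · have hmem : 2^a*s%n ∉ (cycCoset n m s).filter (fun j => k0 ||| j = j ∧ k0 ≠ j) :=
          fun hmem => hpa (Finset.mem_filter.mp hmem).2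
        rw [if_neg hmem, if_neg hpa]
    rw [← hBQ, hco]
  have hQcoeff : Q.coeff 1 = β ^ (s - k0) := by
    rw [hQ, Polynomial.finset_sum_coeff]
    rw [Finset.sum_congr rfl (fun a _ => by
      rw [Polynomial.coeff_C_mul, Polynomial.coeff_X_pow])]
    have h0T : 0 ∈ T := by
      rw [hT]
      refine Finset.mem_filter.mpr ⟨Finset.mem_range.mpr hm, ?_⟩
      rw [pow_zero, one_mul, Nat.mod_eq_of_lt hs]
      exact ⟨hk0s, hk0ne⟩
    rw [Finset.sum_eq_single_of_mem 0 h0T ?_]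
    · rw [pow_zero, one_mul, Nat.mod_eq_of_lt hs, if_pos rfl, mul_one]
    · intro b _ hbne
      rw [if_neg ?_, mul_zero]
      intro h1
      exact hbne (by
        have : (2:ℕ)^b = 1 := h1.symm
        rcases Nat.eq_zero_or_pos b with rfl | hb
        · rfl
        · exfalso
          have : (2:ℕ)^1 ≤ 2^b := Nat.pow_le_pow_right (by norm_num) hb
          omega)
  have hQdeg : Q.natDegree < Fintype.card F := by
    refine lt_of_le_of_lt (cdd_natDegree_sum2 T _ _ (2^(m-1)) ?_) ?_
    · intro a ha
      rw [hT] at ha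
      have := Finset.mem_range.mp (Finset.mem_filter.mp ha).1
      exact Nat.pow_le_pow_right (by norm_num) (by omega)
    · rw [hF]
      exact Nat.pow_lt_pow_right (by norm_num) (by omega)
  have hQ0 : Q = 0 := cdd_poly_zero Q hQdeg hevalQ
  rw [hQ0, Polynomial.coeff_zero] at hQcoeff
  exact pow_ne_zero _ hβ hQcoeff.symm

lemma cdd_code_mono {m n s : ℕ} (hm : 0 < m) (hn : n = 2 ^ m - 1) (hs : s < n)
    {F : Type*} [Field F] {S' : Finset ℕ} (hS' : IsExpSet n S')
    (hsub : ccSet n m (Pset s) ⊆ S') :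
    (extCyclicCode n (ccSet n m (Pset s)) : Set (F → F)) ⊆ extCyclicCode n S' := by
  classical
  have hn0 := cdd_npos hm hn
  rintro c ⟨A, hA, hc⟩
  refine ⟨fun j => if j ∈ ccSet n m (Pset s) then A j else 0, ?_, ?_⟩
  · intro j hjS
    show (if 2*j%n ∈ ccSet n m (Pset s) then A (2*j%n) else 0)
      = (if j ∈ ccSet n m (Pset s) then A j else 0) ^ 2
    by_cases hj : j ∈ ccSet n m (Pset s)
    · rw [if_pos hj, if_pos (cdd_ccSet_closed hm hn hs hj)]
      exact hA j hj
    · have h2 : 2*j%n ∉ ccSet n m (Pset s) := by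
        intro hmem
        have himg : (ccSet n m (Pset s)).image (fun a => 2*a%n) = ccSet n m (Pset s) := by
          apply Finset.eq_of_subset_of_card_le
          · intro b hb
            obtain ⟨a, ha, rfl⟩ := Finset.mem_image.mp hb
            exact cdd_ccSet_closed hm hn hs ha
          · have hinj : Set.InjOn (fun a => 2*a%n) ↑(ccSet n m (Pset s)) := by
              intro a ha b hb hab
              exact cdd_double_inj hm hn (cdd_ccSet_lt hn0 (Finset.mem_coe.mp ha))
                (cdd_ccSet_lt hn0 (Finset.mem_coe.mp hb)) hab
            rw [Finset.card_image_of_injOn hinj]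
        obtain ⟨a, ha, hab⟩ := Finset.mem_image.mp (himg ▸ hmem)
        have haj : a = j := cdd_double_inj hm hn (cdd_ccSet_lt hn0 ha) (hS'.1 j hjS) hab
        exact hj (haj ▸ ha)
      rw [if_neg hj, if_neg h2]
      exact (zero_pow (by norm_num)).symm
  · intro x
    show c x = ∑ j ∈ S', (if j ∈ ccSet n m (Pset s) then A j else 0) * x ^ j
    rw [hc x]
    have he : ∑ j ∈ ccSet n m (Pset s), (if j ∈ ccSet n m (Pset s) then A j else 0) * x^j
        = ∑ j ∈ S', (if j ∈ ccSet n m (Pset s) then A j else 0) * x^j :=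
      Finset.sum_subset hsub (fun j _ hjn => by rw [if_neg hjn, zero_mul])
    rw [← he]
    apply Finset.sum_congr rfl
    intro j hj
    rw [if_pos hj]


/-- Lemma 1: for every `s ∈ {0,…,n-1}` and every `β ∈ F^*`, the cyclic derivative
descendant `D(M_s, β)` of the extended minimal cyclic code `M_s` (the smallest
extended cyclic code containing the derivatives of all codewords of `M_s` in
direction `β`) is the extended cyclic code with exponent set `cc(P(s))`;
in particular it does not depend on `β`. -/
theorem cyclicDD_of_minimal_cyclic_code (m : ℕ) (hm : 0 < m)
    (n : ℕ) (hn : n = 2 ^ m - 1)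
    {F : Type*} [Field F] [Fintype F] (hF : Fintype.card F = 2 ^ m)
    (s : ℕ) (hs : s < n) (β : F) (hβ : β ≠ 0) :
    derivSet β (extCyclicCode n (cycCoset n m s))
        ⊆ (extCyclicCode n (ccSet n m (Pset s)) : Set (F → F)) ∧
    ∀ S' : Finset ℕ, IsExpSet n S' →
      derivSet β (extCyclicCode n (cycCoset n m s))
          ⊆ (extCyclicCode n S' : Set (F → F)) →
      (extCyclicCode n (ccSet n m (Pset s)) : Set (F → F)) ⊆ extCyclicCode n S' := by
  haveI hchar : CharP F 2 := cdd_charP hF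
  have hn0 := cdd_npos hm hn
  have hβn := cdd_beta_pow_n hn hF hβ
  constructor
  · rintro d ⟨c, ⟨A, hA, hc⟩, rfl⟩
    refine ⟨cddB n m s β A, ?_, ?_⟩
    · intro k hk
      exact cdd_B_conj hm hn hs hβ hβn hA (cdd_ccSet_lt hn0 hk)
    · intro x
      show c (x + β) - c x = _
      rw [hc (x + β), hc x]
      exact cdd_deriv_repr hm hn hs β A x
  · intro S' hS' hsubS
    apply cdd_code_mono hm hn hs hS'
    intro k hk
    obtain ⟨k0, hk0, hkc⟩ := Finset.mem_biUnion.mp hk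
    obtain ⟨a, ha, rfl⟩ := cdd_mem_cycCoset_iff.mp hkc
    exact cdd_expset_pow hn0 hS' (cdd_key hm hn hs hF hβ hS' hsubS hk0) a
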